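/- Let φ ∈ S(ℝ³) be spherically symmetric with φ̂(0) ≠ 0, let e₁,…,e_N ∈ ℝ not all zero (in particular with Σⱼ eⱼ ≠ 0 allowed), x, ẋ, ẍ ∈ (ℝ³)^N bounded, and for 0 < σ ≤ 1/3 define ż₂ ∈ L²(ℝ³) by ż₂(k) = 1_{[σ,∞)}(|k|) Σⱼ eⱼ φ̂(k) |k|^{−1/2} e^{−ik·xⱼ} ( |k|^{−1} ⟨κ, ẍⱼ⟩ + ⟨κ, ẋⱼ⟩² ) with κ = k/|k|. Then ‖ż₂‖²_{L²(ℝ³)} = O(ln(σ⁻¹)) as σ → 0. -/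

import Mathlib

open MeasureTheory Complex SchwartzMap

noncomputable section

abbrev R3 : Type := EuclideanSpace ℝ (Fin 3)

set_option maxHeartbeats 4000000 in
/-- Let `φ ∈ S(ℝ³)` be spherically symmetric with `φ̂(0) ≠ 0`, let the
charges `e₁,…,e_N ∈ ℝ` be not all zero (nonzero total charge allowed), and let positions
`x`, velocities `dx` and accelerations `ddx` in `(ℝ³)^N` be given (bounded, being fixed
vectors). For `0 < σ ≤ 1/3` define
`ż₂(k) = 1_{[σ,∞)}(|k|) Σⱼ eⱼ φ̂(k) |k|^{−1/2} e^{−ik·xⱼ}(|k|^{−1}⟨κ, ẍⱼ⟩ + ⟨κ, ẋⱼ⟩²)`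
with `κ = k/|k|`. Then `‖ż₂‖²_{L²} = O(ln(σ⁻¹))` as `σ → 0`. -/
theorem log_divergence_of_z2dot
    (N : ℕ) (e : Fin N → ℝ) (he : ∃ j, e j ≠ 0)
    (φ : SchwartzMap R3 ℂ)
    (hφsym : ∀ k k' : R3, ‖k‖ = ‖k'‖ → φ k = φ k')
    (hφ0 : (fourierTransformCLM ℂ φ) 0 ≠ 0)
    (x dx ddx : Fin N → R3) :
    ∃ C : ℝ, ∀ σ : ℝ, 0 < σ → σ ≤ 1/3 →
      (∫ k : R3, ‖Set.indicator {k : R3 | σ ≤ ‖k‖}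
          (fun k => ∑ j, ((e j : ℝ) : ℂ) * (fourierTransformCLM ℂ φ) k
            * ((Real.sqrt ‖k‖ : ℝ) : ℂ)⁻¹
            * Complex.exp (-Complex.I * ((inner ℝ k (x j) : ℝ) : ℂ))
            * (((‖k‖⁻¹ * (inner ℝ (‖k‖⁻¹ • k) (ddx j) : ℝ)
                + (inner ℝ (‖k‖⁻¹ • k) (dx j) : ℝ) ^ 2 : ℝ)) : ℂ)) k‖ ^ 2)
      ≤ C * Real.log σ⁻¹ := by
  classical
  set Φ : SchwartzMap R3 ℂ := fourierTransformCLM ℂ φ with hΦdef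
  obtain ⟨C₀, hC₀pos, hC₀⟩ := Φ.decay 0 0
  obtain ⟨C₃, hC₃pos, hC₃⟩ := Φ.decay 3 0
  have hC₀' : ∀ k : R3, ‖Φ k‖ ≤ C₀ := by
    intro k; simpa [norm_iteratedFDeriv_zero] using hC₀ k
  have hC₃' : ∀ k : R3, ‖k‖ ^ 3 * ‖Φ k‖ ≤ C₃ := by
    intro k; simpa [norm_iteratedFDeriv_zero] using hC₃ k
  obtain ⟨E₀, hE₀def⟩ : ∃ E₀ : ℝ, E₀ = ∑ j, |e j| * (‖ddx j‖ + ‖dx j‖ ^ 2) := ⟨_, rfl⟩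
  have hE₀0 : 0 ≤ E₀ := hE₀def ▸ Finset.sum_nonneg fun j _ => by positivity
  obtain ⟨K, hKdef⟩ : ∃ K : ℝ, K = (C₀ * E₀) ^ 2 := ⟨_, rfl⟩
  have hK0 : 0 ≤ K := hKdef ▸ sq_nonneg _
  obtain ⟨K', hK'def⟩ : ∃ K' : ℝ, K' = 2 ^ 6 * (C₃ * E₀) ^ 2 := ⟨_, rfl⟩
  have hK'0 : 0 ≤ K' := hK'def ▸ by positivity
  obtain ⟨V, hVdef⟩ : ∃ V : ℝ, V = (volume (Metric.ball (0 : R3) 1)).toReal := ⟨_, rfl⟩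
  have hV0 : 0 ≤ V := hVdef ▸ ENNReal.toReal_nonneg
  have hjap : Integrable (fun k : R3 => (1 + ‖k‖) ^ (-(6:ℝ))) volume := by
    apply integrable_one_add_norm; rw [finrank_euclideanSpace_fin]; norm_num
  set T : ℝ := K' * ∫ k : R3, (1 + ‖k‖) ^ (-(6:ℝ)) with hTdef
  have hT0 : 0 ≤ T :=
    mul_nonneg hK'0 (integral_nonneg fun k => Real.rpow_nonneg (by positivity) _)
  refine ⟨3 * (V * K) + T, ?_⟩
  intro σ hσ hσ3
  have hσ1 : σ ≤ 1 := hσ3.trans (by norm_num)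
  obtain ⟨g₁, hg₁def⟩ : ∃ g₁ : R3 → ℝ,
      g₁ = fun k => Set.indicator (Set.Icc σ 1) (fun y => K * (y ^ 3)⁻¹) ‖k‖ := ⟨_, rfl⟩
  obtain ⟨g₂, hg₂def⟩ : ∃ g₂ : R3 → ℝ, g₂ = fun k => K' * (1 + ‖k‖) ^ (-(6:ℝ)) := ⟨_, rfl⟩
  -- integrability of g₁
  have hg₁eq : g₁ = Set.indicator (norm ⁻¹' Set.Icc σ 1)
      (fun k : R3 => K * (‖k‖ ^ 3)⁻¹) := by
    rw [hg₁def]; funext k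
    exact (Set.indicator_comp_right (norm : R3 → ℝ)
      (s := Set.Icc σ 1) (g := fun y => K * (y ^ 3)⁻¹) (x := k)).symm
  have hg₁int : Integrable g₁ volume := by
    rw [hg₁eq, integrable_indicator_iff (measurable_norm measurableSet_Icc)]
    have hsfin : volume (norm ⁻¹' Set.Icc σ 1 : Set R3) ≠ ⊤ := by
      refine ne_of_lt (lt_of_le_of_lt (measure_mono (fun k hk => ?_))
        (measure_closedBall_lt_top (x := (0:R3)) (r := 1)))
      simpa [Metric.mem_closedBall, dist_zero_right] using hk.2
    refine Measure.integrableOn_of_bounded (M := K * (σ ^ 3)⁻¹) hsfin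
      ((measurable_norm.pow_const 3).inv.const_mul K).aestronglyMeasurable ?_
    refine (ae_restrict_iff' (measurable_norm measurableSet_Icc)).2
      (Filter.Eventually.of_forall fun k hk => ?_)
    have h1 : σ ^ 3 ≤ ‖k‖ ^ 3 := pow_le_pow_left₀ hσ.le hk.1 3
    have h2 : (‖k‖ ^ 3)⁻¹ ≤ (σ ^ 3)⁻¹ := inv_anti₀ (by positivity) h1
    rw [Real.norm_eq_abs, _root_.abs_of_nonneg (mul_nonneg hK0 (by positivity))]
    exact mul_le_mul_of_nonneg_left h2 hK0
  have hg₂int : Integrable g₂ volume := hg₂def ▸ hjap.const_mul K'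
  -- value of ∫ g₁
  have hg₁val : ∫ k : R3, g₁ k = 3 * (V * (K * Real.log σ⁻¹)) := by
    rw [hVdef]
    have hpolar := MeasureTheory.integral_fun_norm_addHaar (volume : Measure R3)
      (Set.indicator (Set.Icc σ 1) (fun y => K * (y ^ 3)⁻¹))
    rw [finrank_euclideanSpace_fin] at hpolar
    simp only [hg₁def]
    simp only [measureReal_def] at hpolar
    rw [hpolar]
    have hcong : ∀ y : ℝ, y ^ (3 - 1) • Set.indicator (Set.Icc σ 1)
        (fun y => K * (y ^ 3)⁻¹) y = Set.indicator (Set.Icc σ 1) (fun y => K * y⁻¹) y := by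
      intro y
      by_cases hy : y ∈ Set.Icc σ 1
      · have hy0 : y ≠ 0 := by
          intro h; rw [h] at hy; exact absurd hy.1 (not_le.2 hσ)
        rw [Set.indicator_of_mem hy, Set.indicator_of_mem hy, smul_eq_mul]
        field_simp
        ring
      · simp [Set.indicator_of_notMem hy]
    have hIcc : Set.Ioi (0:ℝ) ∩ Set.Icc σ 1 = Set.Icc σ 1 :=
      Set.inter_eq_right.mpr fun y hy => lt_of_lt_of_le hσ hy.1
    simp only [hcong]
    rw [setIntegral_indicator measurableSet_Icc, hIcc,
      integral_Icc_eq_integral_Ioc, ← intervalIntegral.integral_of_le hσ1,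
      intervalIntegral.integral_const_mul, integral_inv_of_pos hσ one_pos,
      one_div, nsmul_eq_mul, smul_eq_mul]
    norm_num
  -- pointwise bound
  have hpt : ∀ k : R3, ‖Set.indicator {k : R3 | σ ≤ ‖k‖}
      (fun k => ∑ j, ((e j : ℝ) : ℂ) * Φ k
        * ((Real.sqrt ‖k‖ : ℝ) : ℂ)⁻¹
        * Complex.exp (-Complex.I * ((inner ℝ k (x j) : ℝ) : ℂ))
        * (((‖k‖⁻¹ * (inner ℝ (‖k‖⁻¹ • k) (ddx j) : ℝ)
            + (inner ℝ (‖k‖⁻¹ • k) (dx j) : ℝ) ^ 2 : ℝ)) : ℂ)) k‖ ^ 2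
      ≤ g₁ k + g₂ k := by
    intro k
    simp only [hg₁def, hg₂def]
    have hg₁nn : 0 ≤ Set.indicator (Set.Icc σ 1) (fun y => K * (y ^ 3)⁻¹) ‖k‖ := Set.indicator_nonneg (fun y hy => mul_nonneg hK0 (inv_nonneg.2 (pow_nonneg (le_trans hσ.le hy.1) 3))) _
    have hg₂nn : 0 ≤ K' * (1 + ‖k‖) ^ (-(6:ℝ)) := mul_nonneg hK'0 (Real.rpow_nonneg (by positivity : (0:ℝ) ≤ 1 + ‖k‖) _)
    by_cases hk : k ∈ {k : R3 | σ ≤ ‖k‖}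
    swap
    · rw [Set.indicator_of_notMem hk]; simpa using add_nonneg hg₁nn hg₂nn
    rw [Set.indicator_of_mem hk]
    have hkσ : σ ≤ ‖k‖ := hk
    have hk0 : (0:ℝ) < ‖k‖ := lt_of_lt_of_le hσ hkσ
    have hκ : ‖(‖k‖⁻¹ • k : R3)‖ = 1 := by
      rw [norm_smul, norm_inv, norm_norm]; field_simp
    have hterm : ∀ j, ‖((e j : ℝ) : ℂ) * Φ k
        * ((Real.sqrt ‖k‖ : ℝ) : ℂ)⁻¹
        * Complex.exp (-Complex.I * ((inner ℝ k (x j) : ℝ) : ℂ))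
        * (((‖k‖⁻¹ * (inner ℝ (‖k‖⁻¹ • k) (ddx j) : ℝ)
            + (inner ℝ (‖k‖⁻¹ • k) (dx j) : ℝ) ^ 2 : ℝ)) : ℂ)‖
        ≤ |e j| * ‖Φ k‖ * (Real.sqrt ‖k‖)⁻¹ * (‖k‖⁻¹ * ‖ddx j‖ + ‖dx j‖ ^ 2) := by
      intro j
      have hD : ‖Complex.exp (-Complex.I * ((inner ℝ k (x j) : ℝ) : ℂ))‖ = 1 := by
        rw [Complex.norm_exp]; simp
      have hnorm : ‖((e j : ℝ) : ℂ) * Φ k * ((Real.sqrt ‖k‖ : ℝ) : ℂ)⁻¹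
          * Complex.exp (-Complex.I * ((inner ℝ k (x j) : ℝ) : ℂ))
          * (((‖k‖⁻¹ * (inner ℝ (‖k‖⁻¹ • k) (ddx j) : ℝ)
              + (inner ℝ (‖k‖⁻¹ • k) (dx j) : ℝ) ^ 2 : ℝ)) : ℂ)‖
          = |e j| * ‖Φ k‖ * (Real.sqrt ‖k‖)⁻¹
            * |‖k‖⁻¹ * (inner ℝ (‖k‖⁻¹ • k) (ddx j) : ℝ)
              + (inner ℝ (‖k‖⁻¹ • k) (dx j) : ℝ) ^ 2| := by
        rw [norm_mul, norm_mul, norm_mul, norm_mul, hD, norm_inv]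
        simp only [Complex.norm_real, Real.norm_eq_abs,
          _root_.abs_of_nonneg (Real.sqrt_nonneg ‖k‖)]
        ring
      rw [hnorm]
      have h1 : |(inner ℝ (‖k‖⁻¹ • k) (ddx j) : ℝ)| ≤ ‖ddx j‖ := by
        calc |(inner ℝ (‖k‖⁻¹ • k) (ddx j) : ℝ)| ≤ ‖(‖k‖⁻¹ • k : R3)‖ * ‖ddx j‖ :=
              abs_real_inner_le_norm _ _
          _ = ‖ddx j‖ := by rw [hκ, one_mul]
      have h2' : |(inner ℝ (‖k‖⁻¹ • k) (dx j) : ℝ)| ≤ ‖dx j‖ := by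
        calc |(inner ℝ (‖k‖⁻¹ • k) (dx j) : ℝ)| ≤ ‖(‖k‖⁻¹ • k : R3)‖ * ‖dx j‖ :=
              abs_real_inner_le_norm _ _
          _ = ‖dx j‖ := by rw [hκ, one_mul]
      have h2 : (inner ℝ (‖k‖⁻¹ • k) (dx j) : ℝ) ^ 2 ≤ ‖dx j‖ ^ 2 :=
        sq_le_sq' (neg_le_of_abs_le h2') (le_of_abs_le h2')
      have hr : |‖k‖⁻¹ * (inner ℝ (‖k‖⁻¹ • k) (ddx j) : ℝ)
          + (inner ℝ (‖k‖⁻¹ • k) (dx j) : ℝ) ^ 2|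
          ≤ ‖k‖⁻¹ * ‖ddx j‖ + ‖dx j‖ ^ 2 := by
        calc |‖k‖⁻¹ * (inner ℝ (‖k‖⁻¹ • k) (ddx j) : ℝ)
            + (inner ℝ (‖k‖⁻¹ • k) (dx j) : ℝ) ^ 2|
            ≤ |‖k‖⁻¹ * (inner ℝ (‖k‖⁻¹ • k) (ddx j) : ℝ)|
              + |(inner ℝ (‖k‖⁻¹ • k) (dx j) : ℝ) ^ 2| := abs_add_le _ _
          _ = ‖k‖⁻¹ * |(inner ℝ (‖k‖⁻¹ • k) (ddx j) : ℝ)|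
              + (inner ℝ (‖k‖⁻¹ • k) (dx j) : ℝ) ^ 2 := by
              rw [abs_mul, _root_.abs_of_nonneg (by positivity : (0:ℝ) ≤ ‖k‖⁻¹),
                _root_.abs_of_nonneg (sq_nonneg ((inner ℝ (‖k‖⁻¹ • k) (dx j) : ℝ)))]
          _ ≤ ‖k‖⁻¹ * ‖ddx j‖ + ‖dx j‖ ^ 2 := by gcongr
      gcongr
    -- sum bound with a generic per-term coefficient
    have hsumbound : ∀ c : ℝ, 0 ≤ c →
        (∀ j, |e j| * ‖Φ k‖ * (Real.sqrt ‖k‖)⁻¹ * (‖k‖⁻¹ * ‖ddx j‖ + ‖dx j‖ ^ 2)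
          ≤ (|e j| * (‖ddx j‖ + ‖dx j‖ ^ 2)) * c) →
        ‖∑ j, ((e j : ℝ) : ℂ) * Φ k
          * ((Real.sqrt ‖k‖ : ℝ) : ℂ)⁻¹
          * Complex.exp (-Complex.I * ((inner ℝ k (x j) : ℝ) : ℂ))
          * (((‖k‖⁻¹ * (inner ℝ (‖k‖⁻¹ • k) (ddx j) : ℝ)
              + (inner ℝ (‖k‖⁻¹ • k) (dx j) : ℝ) ^ 2 : ℝ)) : ℂ)‖ ≤ E₀ * c := by
      intro c hc hb
      calc ‖∑ j, ((e j : ℝ) : ℂ) * Φ k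
          * ((Real.sqrt ‖k‖ : ℝ) : ℂ)⁻¹
          * Complex.exp (-Complex.I * ((inner ℝ k (x j) : ℝ) : ℂ))
          * (((‖k‖⁻¹ * (inner ℝ (‖k‖⁻¹ • k) (ddx j) : ℝ)
              + (inner ℝ (‖k‖⁻¹ • k) (dx j) : ℝ) ^ 2 : ℝ)) : ℂ)‖
          ≤ ∑ j, ‖((e j : ℝ) : ℂ) * Φ k
            * ((Real.sqrt ‖k‖ : ℝ) : ℂ)⁻¹
            * Complex.exp (-Complex.I * ((inner ℝ k (x j) : ℝ) : ℂ))
            * (((‖k‖⁻¹ * (inner ℝ (‖k‖⁻¹ • k) (ddx j) : ℝ)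
                + (inner ℝ (‖k‖⁻¹ • k) (dx j) : ℝ) ^ 2 : ℝ)) : ℂ)‖ := norm_sum_le _ _
        _ ≤ ∑ j, (|e j| * (‖ddx j‖ + ‖dx j‖ ^ 2)) * c :=
            Finset.sum_le_sum fun j _ => (hterm j).trans (hb j)
        _ = E₀ * c := by rw [← Finset.sum_mul, ← hE₀def]
    by_cases hk1 : ‖k‖ ≤ 1
    · -- annulus case: bound by g₁
      have hinv1 : (1:ℝ) ≤ ‖k‖⁻¹ := (one_le_inv₀ hk0).2 hk1
      have hb : ∀ j, |e j| * ‖Φ k‖ * (Real.sqrt ‖k‖)⁻¹ * (‖k‖⁻¹ * ‖ddx j‖ + ‖dx j‖ ^ 2)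
          ≤ (|e j| * (‖ddx j‖ + ‖dx j‖ ^ 2)) * (C₀ * ((Real.sqrt ‖k‖)⁻¹ * ‖k‖⁻¹)) := by
        intro j
        have hstep : ‖k‖⁻¹ * ‖ddx j‖ + ‖dx j‖ ^ 2 ≤ ‖k‖⁻¹ * (‖ddx j‖ + ‖dx j‖ ^ 2) := by
          rw [mul_add]
          gcongr
          exact le_mul_of_one_le_left (sq_nonneg _) hinv1
        calc |e j| * ‖Φ k‖ * (Real.sqrt ‖k‖)⁻¹ * (‖k‖⁻¹ * ‖ddx j‖ + ‖dx j‖ ^ 2)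
            ≤ |e j| * C₀ * (Real.sqrt ‖k‖)⁻¹ * (‖k‖⁻¹ * (‖ddx j‖ + ‖dx j‖ ^ 2)) := by
              gcongr
              · exact hC₀' k
          _ = (|e j| * (‖ddx j‖ + ‖dx j‖ ^ 2)) * (C₀ * ((Real.sqrt ‖k‖)⁻¹ * ‖k‖⁻¹)) := by
              ring
      have hsum := hsumbound (C₀ * ((Real.sqrt ‖k‖)⁻¹ * ‖k‖⁻¹)) (by positivity) hb
      have hsq := pow_le_pow_left₀ (norm_nonneg _) hsum 2
      have hsqrt : ((Real.sqrt ‖k‖)⁻¹) ^ 2 = ‖k‖⁻¹ := by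
        rw [← Real.sqrt_inv, Real.sq_sqrt (by positivity)]
      have heq : (E₀ * (C₀ * ((Real.sqrt ‖k‖)⁻¹ * ‖k‖⁻¹))) ^ 2 = K * (‖k‖ ^ 3)⁻¹ := by
        have : (E₀ * (C₀ * ((Real.sqrt ‖k‖)⁻¹ * ‖k‖⁻¹))) ^ 2
            = (C₀ * E₀) ^ 2 * (((Real.sqrt ‖k‖)⁻¹) ^ 2 * (‖k‖⁻¹) ^ 2) := by ring
        have h3 : ‖k‖⁻¹ * (‖k‖⁻¹) ^ 2 = (‖k‖ ^ 3)⁻¹ := by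
          rw [← inv_pow]
          ring
        rw [this, hsqrt, ← h3, hKdef]
      have hg₁k : Set.indicator (Set.Icc σ 1) (fun y => K * (y ^ 3)⁻¹) ‖k‖ = K * (‖k‖ ^ 3)⁻¹ :=
        Set.indicator_of_mem (Set.mem_Icc.mpr ⟨hkσ, hk1⟩) _
      have : ‖∑ j, ((e j : ℝ) : ℂ) * Φ k
          * ((Real.sqrt ‖k‖ : ℝ) : ℂ)⁻¹
          * Complex.exp (-Complex.I * ((inner ℝ k (x j) : ℝ) : ℂ))
          * (((‖k‖⁻¹ * (inner ℝ (‖k‖⁻¹ • k) (ddx j) : ℝ)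
              + (inner ℝ (‖k‖⁻¹ • k) (dx j) : ℝ) ^ 2 : ℝ)) : ℂ)‖ ^ 2
          ≤ Set.indicator (Set.Icc σ 1) (fun y => K * (y ^ 3)⁻¹) ‖k‖ := by
        rw [hg₁k, ← heq]; exact hsq
      linarith
    · -- tail case: bound by g₂
      push_neg at hk1
      have hk1' : (1:ℝ) ≤ ‖k‖ := hk1.le
      have hΦk : ‖Φ k‖ ≤ C₃ * (‖k‖ ^ 3)⁻¹ := by
        have hpow : (0:ℝ) < ‖k‖ ^ 3 := by positivity
        calc ‖Φ k‖ = ‖k‖ ^ 3 * ‖Φ k‖ * (‖k‖ ^ 3)⁻¹ := by field_simp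
          _ ≤ C₃ * (‖k‖ ^ 3)⁻¹ := by gcongr ?_ * _; exact hC₃' k
      have hs1 : (Real.sqrt ‖k‖)⁻¹ ≤ 1 := by
        apply inv_le_one_of_one_le₀
        rw [show (1:ℝ) = Real.sqrt 1 from (Real.sqrt_one).symm]
        exact Real.sqrt_le_sqrt hk1'
      have hi1 : ‖k‖⁻¹ ≤ 1 := inv_le_one_of_one_le₀ hk1'
      have hb : ∀ j, |e j| * ‖Φ k‖ * (Real.sqrt ‖k‖)⁻¹ * (‖k‖⁻¹ * ‖ddx j‖ + ‖dx j‖ ^ 2)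
          ≤ (|e j| * (‖ddx j‖ + ‖dx j‖ ^ 2)) * (C₃ * (‖k‖ ^ 3)⁻¹) := by
        intro j
        have hstep : ‖k‖⁻¹ * ‖ddx j‖ + ‖dx j‖ ^ 2 ≤ ‖ddx j‖ + ‖dx j‖ ^ 2 := by
          gcongr
          exact mul_le_of_le_one_left (norm_nonneg _) hi1
        calc |e j| * ‖Φ k‖ * (Real.sqrt ‖k‖)⁻¹ * (‖k‖⁻¹ * ‖ddx j‖ + ‖dx j‖ ^ 2)
            ≤ |e j| * (C₃ * (‖k‖ ^ 3)⁻¹) * 1 * (‖ddx j‖ + ‖dx j‖ ^ 2) := by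
              gcongr
          _ = (|e j| * (‖ddx j‖ + ‖dx j‖ ^ 2)) * (C₃ * (‖k‖ ^ 3)⁻¹) := by ring
      have hsum := hsumbound (C₃ * (‖k‖ ^ 3)⁻¹) (by positivity) hb
      have hsq := pow_le_pow_left₀ (norm_nonneg _) hsum 2
      have hineq : (E₀ * (C₃ * (‖k‖ ^ 3)⁻¹)) ^ 2 ≤ K' * (1 + ‖k‖) ^ (-(6:ℝ)) := by
        have h6 : ‖k‖⁻¹ ≤ 2 * (1+‖k‖)⁻¹ := by
          rw [inv_eq_one_div,
            show 2 * (1+‖k‖)⁻¹ = 2/(1+‖k‖) by rw [div_eq_mul_inv],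
            div_le_div_iff₀ hk0 (by positivity : (0:ℝ) < 1 + ‖k‖)]
          linarith
        have h6p : (‖k‖⁻¹) ^ 6 ≤ (2 * (1+‖k‖)⁻¹) ^ 6 :=
          pow_le_pow_left₀ (by positivity) h6 6
        have hrp : (1 + ‖k‖) ^ (-(6:ℝ)) = ((1+‖k‖) ^ (6:ℕ))⁻¹ := by
          rw [show ((6:ℝ)) = ((6:ℕ):ℝ) by norm_num, ← Real.rpow_natCast (1+‖k‖) 6,
            ← Real.rpow_neg (by positivity)]
        have hexp : (E₀ * (C₃ * (‖k‖ ^ 3)⁻¹)) ^ 2 = (C₃ * E₀) ^ 2 * (‖k‖⁻¹) ^ 6 := by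
          rw [← inv_pow]
          ring
        rw [hexp, hrp, hK'def]
        calc (C₃ * E₀) ^ 2 * (‖k‖⁻¹) ^ 6 ≤ (C₃ * E₀) ^ 2 * (2 * (1+‖k‖)⁻¹) ^ 6 := by
              gcongr
          _ = 2 ^ 6 * (C₃ * E₀) ^ 2 * ((1+‖k‖) ^ (6:ℕ))⁻¹ := by
              rw [mul_pow 2 ((1+‖k‖)⁻¹) 6, inv_pow]
              ring
      linarith [hsq.trans hineq]
  -- assemble
  have hmono : (∫ k : R3, ‖Set.indicator {k : R3 | σ ≤ ‖k‖}
      (fun k => ∑ j, ((e j : ℝ) : ℂ) * Φ k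
        * ((Real.sqrt ‖k‖ : ℝ) : ℂ)⁻¹
        * Complex.exp (-Complex.I * ((inner ℝ k (x j) : ℝ) : ℂ))
        * (((‖k‖⁻¹ * (inner ℝ (‖k‖⁻¹ • k) (ddx j) : ℝ)
            + (inner ℝ (‖k‖⁻¹ • k) (dx j) : ℝ) ^ 2 : ℝ)) : ℂ)) k‖ ^ 2)
      ≤ ∫ k : R3, (g₁ k + g₂ k) :=
    integral_mono_of_nonneg (Filter.Eventually.of_forall fun k => by positivity)
      (hg₁int.add hg₂int) (Filter.Eventually.of_forall hpt)
  have hval : ∫ k : R3, (g₁ k + g₂ k) = 3 * (V * (K * Real.log σ⁻¹)) + T := by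
    rw [integral_add hg₁int hg₂int, hg₁val, hTdef]
    simp only [hg₂def]
    rw [integral_const_mul]
  have hL1 : (1:ℝ) ≤ Real.log σ⁻¹ := by
    have h3 : (3:ℝ) ≤ σ⁻¹ := by
      rw [show (3:ℝ) = (3⁻¹)⁻¹ by norm_num]
      exact inv_anti₀ hσ (by linarith)
    have hlog3 : (1:ℝ) ≤ Real.log 3 := by
      rw [Real.le_log_iff_exp_le (by norm_num)]
      exact (Real.exp_one_lt_d9).le.trans (by norm_num)
    exact hlog3.trans (Real.log_le_log (by norm_num) h3)
  calc (∫ k : R3, ‖Set.indicator {k : R3 | σ ≤ ‖k‖}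
      (fun k => ∑ j, ((e j : ℝ) : ℂ) * Φ k
        * ((Real.sqrt ‖k‖ : ℝ) : ℂ)⁻¹
        * Complex.exp (-Complex.I * ((inner ℝ k (x j) : ℝ) : ℂ))
        * (((‖k‖⁻¹ * (inner ℝ (‖k‖⁻¹ • k) (ddx j) : ℝ)
            + (inner ℝ (‖k‖⁻¹ • k) (dx j) : ℝ) ^ 2 : ℝ)) : ℂ)) k‖ ^ 2)
      ≤ 3 * (V * (K * Real.log σ⁻¹)) + T := by rw [← hval]; exact hmono
    _ ≤ (3 * (V * K) + T) * Real.log σ⁻¹ := by nlinarith [mul_nonneg hV0 hK0]
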